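/- Let n be an even positive integer and let (a_i)_{i=1}^∞ be a real sequence with Σ_{i=1}^∞ |a_i| ≤ 1. Then | Σ_{k=1}^n (−1)^k · |Σ_{i=1}^k a_i| | ≤ 1. (In the language of free Banach lattices: ‖Σ_{k=1}^n (−1)^k |δ_{s_k}|‖_{FBL^{(∞)}[c₀]} ≤ 1, where (s_k) is the summing basis of c₀.) -/

import Mathlib

private lemma pair_sum (a : ℕ → ℝ) (m : ℕ) :
    (∑ k ∈ Finset.Icc 1 (2*m), (-1 : ℝ) ^ k * |∑ i ∈ Finset.range k, a i|)
      = ∑ j ∈ Finset.range m,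
          (|∑ i ∈ Finset.range (2*j+2), a i| - |∑ i ∈ Finset.range (2*j+1), a i|) := by
  induction m with
  | zero => simp
  | succ m ih =>
      have h2 : 2 * (m+1) = (2*m + 1) + 1 := by ring
      rw [h2, Finset.sum_Icc_succ_top (by omega), Finset.sum_Icc_succ_top (by omega),
        ih, Finset.sum_range_succ _ m]
      have hodd : (-1 : ℝ) ^ (2*m+1) = -1 := by
        rw [pow_succ, pow_mul]; norm_num
      have heven : (-1 : ℝ) ^ (2*m+1+1) = 1 := by
        rw [pow_succ, hodd]; norm_num
      rw [hodd, heven]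
      simp only [show 2*m+1+1 = 2*m+2 from rfl]
      ring

/-- Let `n` be an even positive integer and `(aᵢ)` a real sequence with `∑ |aᵢ| ≤ 1`.
Then `|∑_{k=1}^n (-1)^k |∑_{i=1}^k aᵢ|| ≤ 1` (the `FBL^(∞)[c₀]`-estimate for alternating
sums of moduli of the summing basis). -/
theorem stmt11 (n : ℕ) (hn : 0 < n) (hne : Even n) (a : ℕ → ℝ)
    (hsum : Summable fun i => |a i|) (h1 : (∑' i, |a i|) ≤ 1) :
    abs (∑ k ∈ Finset.Icc 1 n, (-1 : ℝ) ^ k * |∑ i ∈ Finset.range k, a i|) ≤ 1 := by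
  obtain ⟨m, hm⟩ := hne
  have hn2 : n = 2 * m := by omega
  subst hn2
  rw [pair_sum]
  calc |∑ j ∈ Finset.range m,
          (|∑ i ∈ Finset.range (2*j+2), a i| - |∑ i ∈ Finset.range (2*j+1), a i|)|
      ≤ ∑ j ∈ Finset.range m,
          abs (|∑ i ∈ Finset.range (2*j+2), a i| - |∑ i ∈ Finset.range (2*j+1), a i|) :=
        Finset.abs_sum_le_sum_abs _ _
    _ ≤ ∑ j ∈ Finset.range m, |a (2*j+1)| := by
        apply Finset.sum_le_sum
        intro j _
        rw [Finset.sum_range_succ]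
        have h := abs_abs_sub_abs_le_abs_sub
          (∑ i ∈ Finset.range (2*j+1), a i + a (2*j+1)) (∑ i ∈ Finset.range (2*j+1), a i)
        rwa [add_sub_cancel_left] at h
    _ = ∑ i ∈ (Finset.range m).image (fun j => 2*j+1), |a i| := by
        rw [Finset.sum_image]
        intro x _ y _ h; simp only at h; omega
    _ ≤ ∑' i, |a i| := Summable.sum_le_tsum _ (fun i _ => abs_nonneg _) hsum
    _ ≤ 1 := h1
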